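/- For every γ ≥ 1 and every q ∈ (1/2, 1): q^γ - γ(1-q) q^{γ-1} log(1-q) - (1-q)^γ + γ q (1-q)^{γ-1} log q > 0. -/

import Mathlib

open Real

theorem binary_underconfidence_key_ineq_ge_one (γ : ℝ) (hγ : 1 ≤ γ)
    (q : ℝ) (hq : q ∈ Set.Ioo (1/2 : ℝ) 1) :
    0 < q ^ γ - γ * (1 - q) * q ^ (γ - 1) * Real.log (1 - q)
        - (1 - q) ^ γ + γ * q * (1 - q) ^ (γ - 1) * Real.log q := by
  obtain ⟨hq2, hq1⟩ := hq
  set p : ℝ := 1 - q with hpdef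
  have hq0 : 0 < q := by linarith
  have hp0 : 0 < p := by simp [hpdef]; linarith
  have hpq : p < q := by simp [hpdef]; linarith
  have hγ0 : 0 < γ := by linarith
  have hlogq : Real.log q < 0 := Real.log_neg hq0 hq1
  have hlogp : Real.log p < 0 := Real.log_neg hp0 (by simp [hpdef]; linarith)
  -- key: q log q > p log p
  have h1 : Real.log p - Real.log q < p / q - 1 := by
    have hne : p / q ≠ 1 := by
      intro h
      have : p = q := by field_simp at h; linarith
      linarith
    have := Real.log_lt_sub_one_of_pos (div_pos hp0 hq0) hne
    rwa [Real.log_div hp0.ne' hq0.ne'] at this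
  have h2 : 1 - 1 / q ≤ Real.log q := by
    have h := Real.log_le_sub_one_of_pos (show (0:ℝ) < 1/q by positivity)
    rw [Real.log_div one_ne_zero hq0.ne', Real.log_one] at h
    linarith
  have hkey : 0 < q * Real.log q - p * Real.log p := by
    have e1 : p * (Real.log q - Real.log p) > p * (1 - p / q) := by
      have : Real.log q - Real.log p > 1 - p / q := by linarith
      exact (mul_lt_mul_of_pos_left this hp0)
    have hq' : q ≠ 0 := hq0.ne'
    have e2 : p * (1 - p / q) + (q - p) * (1 - 1 / q) = 0 := by
      field_simp
      ring_nf
      rw [hpdef]; ring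
    nlinarith [mul_le_mul_of_nonneg_left h2 (show (0:ℝ) ≤ q - p by linarith)]
  set A : ℝ := q - γ * p * Real.log p with hA
  set B : ℝ := p - γ * q * Real.log q with hB
  have hApos : 0 < A := by
    have h : 0 < γ * p * (-Real.log p) := by
      apply mul_pos (mul_pos hγ0 hp0); linarith
    rw [hA]; nlinarith
  have hBpos : 0 < B := by
    rw [hB]; nlinarith [mul_pos (mul_pos hγ0 hq0) (neg_pos.mpr hlogq)]
  have hAB : B < A := by nlinarith
  have hpow : p ^ (γ - 1) ≤ q ^ (γ - 1) :=
    Real.rpow_le_rpow hp0.le hpq.le (by linarith)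
  have hppow : 0 < p ^ (γ - 1) := Real.rpow_pos_of_pos hp0 _
  have hqγ : q ^ γ = q ^ (γ - 1) * q := by
    rw [← Real.rpow_add_one hq0.ne' (γ - 1)]; ring_nf
  have hpγ : p ^ γ = p ^ (γ - 1) * p := by
    rw [← Real.rpow_add_one hp0.ne' (γ - 1)]; ring_nf
  have heq : q ^ γ - γ * p * q ^ (γ - 1) * Real.log p
      - p ^ γ + γ * q * p ^ (γ - 1) * Real.log q
      = q ^ (γ - 1) * A - p ^ (γ - 1) * B := by
    rw [hqγ, hpγ, hA, hB]; ring
  rw [heq]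
  nlinarith [mul_le_mul hpow hAB.le hBpos.le (Real.rpow_pos_of_pos hq0 (γ-1)).le]
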